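/- Fix 0 < δ < 1 and the δ-random model. For positive integers n, m, the expectation of R_n R_m equals ∏_{p∣n, p∤m} p^{1-δ} · ∏_{p∣m, p∤n} p^{1-δ} · ∏_{p ∣ gcd(n,m)} p^{2-δ}(1 − p^{δ-1} + p^{-1}), and this is at most 2 · rad(n)^{1-δ} rad(m)^{1-δ} rad(gcd(n,m))^δ. -/

import Mathlib

open scoped Classical
open MeasureTheory ProbabilityTheory

lemma integral_prod_of_iIndep {Ω : Type*} [MeasurableSpace Ω] (μ : Measure Ω)
    [IsProbabilityMeasure μ] (X : ℕ → Ω → ℝ) (hmeas : ∀ p, Measurable (X p))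
    (hindep : iIndepFun X μ) (s : Finset ℕ) :
    ∫ ω, ∏ p ∈ s, X p ω ∂μ = ∏ p ∈ s, ∫ ω, X p ω ∂μ := by
  classical
  induction s using Finset.induction_on with
  | empty => simp
  | @insert i s hi ih =>
    have hprod : Measurable fun ω => ∏ p ∈ s, X p ω :=
      Finset.measurable_prod _ fun p _ => hmeas p
    have h := (hindep.indepFun_finsetProd_of_notMem hmeas hi).integral_mul_eq_mul_integral
      (by rw [Finset.prod_fn]; exact hprod.aestronglyMeasurable)
      (hmeas i).aestronglyMeasurable
    rw [show ((∏ j ∈ s, X j) * X i) = fun ω => (∏ p ∈ s, X p ω) * X i ω from by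
        ext ω; simp,
      show (∏ j ∈ s, X j) = fun ω => ∏ p ∈ s, X p ω from by ext ω; simp] at h
    rw [Finset.prod_insert hi]
    calc ∫ ω, ∏ p ∈ insert i s, X p ω ∂μ
        = ∫ ω, (∏ p ∈ s, X p ω) * X i ω ∂μ := by
          apply integral_congr_ae; filter_upwards with ω
          rw [Finset.prod_insert hi, mul_comm]
      _ = (∫ ω, ∏ p ∈ s, X p ω ∂μ) * ∫ ω, X i ω ∂μ := h
      _ = _ := by rw [ih]; ring

/-- `rad n` : the radical of `n`, the product of the distinct primes dividing `n`. -/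
def rad (n : ℕ) : ℕ := ∏ p ∈ n.primeFactors, p

theorem stmt16 {Ω : Type*} [MeasurableSpace Ω] (μ : Measure Ω) [IsProbabilityMeasure μ]
    (δ : ℝ) (h0 : 0 < δ) (h1 : δ < 1)
    (A : ℕ → Set Ω) (hmeas : ∀ p, MeasurableSet (A p))
    (hindep : iIndepSet A μ)
    (hprob : ∀ p : ℕ, p.Prime →
      μ (A p) = ENNReal.ofReal ((((p : ℝ) ^ (1 - δ)) - 1) / ((p : ℝ) - 1)))
    (n m : ℕ) (hn : 0 < n) (hm : 0 < m) :
    (∫ ω, (∏ p ∈ n.primeFactors, if ω ∈ A p then (p : ℝ) else 1)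
        * (∏ p ∈ m.primeFactors, if ω ∈ A p then (p : ℝ) else 1) ∂μ)
      = (∏ p ∈ n.primeFactors \ m.primeFactors, (p : ℝ) ^ (1 - δ))
        * (∏ p ∈ m.primeFactors \ n.primeFactors, (p : ℝ) ^ (1 - δ))
        * (∏ p ∈ (Nat.gcd n m).primeFactors,
            (p : ℝ) ^ (2 - δ) * (1 - (p : ℝ) ^ (δ - 1) + (p : ℝ)⁻¹)) ∧
    (∫ ω, (∏ p ∈ n.primeFactors, if ω ∈ A p then (p : ℝ) else 1)
        * (∏ p ∈ m.primeFactors, if ω ∈ A p then (p : ℝ) else 1) ∂μ)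
      ≤ 2 * (rad n : ℝ) ^ (1 - δ) * (rad m : ℝ) ^ (1 - δ)
          * (rad (Nat.gcd n m) : ℝ) ^ δ := by
  classical
  set U : Finset ℕ := n.primeFactors ∪ m.primeFactors with hU
  set w : ℕ → ℝ := fun p =>
    (if p ∈ n.primeFactors then (p : ℝ) else 1) *
    (if p ∈ m.primeFactors then (p : ℝ) else 1) with hw
  set X : ℕ → Ω → ℝ := fun p ω =>
    (A p).indicator (fun _ => (1 : ℝ)) ω * (w p - 1) + 1 with hXdef
  have hX : ∀ p ω, X p ω = if ω ∈ A p then w p else 1 := by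
    intro p ω
    simp only [hXdef, Set.indicator_apply]
    split_ifs <;> ring
  have hXmeas : ∀ p, Measurable (X p) := fun p =>
    ((measurable_const.indicator (hmeas p)).mul_const _).add_const 1
  have hXindep : iIndepFun X μ := by
    have h1 := hindep.iIndepFun_indicator (β := ℝ) (m := Real.measurableSpace)
    exact h1.comp (fun p => fun x : ℝ => x * (w p - 1) + 1)
      (fun p => (measurable_id.mul_const _).add_const 1)
  -- rewrite the integrand as a product over U
  have key : ∀ ω : Ω,
      (∏ p ∈ n.primeFactors, if ω ∈ A p then (p : ℝ) else 1)
        * (∏ p ∈ m.primeFactors, if ω ∈ A p then (p : ℝ) else 1)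
      = ∏ p ∈ U, X p ω := by
    intro ω
    have e1 : (∏ p ∈ n.primeFactors, if ω ∈ A p then (p : ℝ) else 1)
        = ∏ p ∈ U, (if p ∈ n.primeFactors then (if ω ∈ A p then (p : ℝ) else 1) else 1) := by
      rw [Finset.prod_ite_mem, Finset.union_inter_cancel_left]
    have e2 : (∏ p ∈ m.primeFactors, if ω ∈ A p then (p : ℝ) else 1)
        = ∏ p ∈ U, (if p ∈ m.primeFactors then (if ω ∈ A p then (p : ℝ) else 1) else 1) := by
      rw [Finset.prod_ite_mem, Finset.union_inter_cancel_right]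
    rw [e1, e2, ← Finset.prod_mul_distrib]
    refine Finset.prod_congr rfl fun p _ => ?_
    rw [hX]
    simp only [hw]
    split_ifs <;> ring
  -- the value of each individual integral
  have hq : ∀ p : ℕ, p.Prime → (0 : ℝ) ≤ (((p : ℝ) ^ (1 - δ)) - 1) / ((p : ℝ) - 1) := by
    intro p hp
    have h2 : (2 : ℝ) ≤ (p : ℝ) := by exact_mod_cast hp.two_le
    have : (1 : ℝ) ≤ (p : ℝ) ^ (1 - δ) :=
      Real.one_le_rpow (by linarith) (by linarith)
    apply div_nonneg <;> linarith
  have hint : ∀ p : ℕ, p.Prime → ∫ ω, X p ω ∂μ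
      = 1 + (w p - 1) * ((((p : ℝ) ^ (1 - δ)) - 1) / ((p : ℝ) - 1)) := by
    intro p hp
    have hI : Integrable (fun ω => (A p).indicator (fun _ => (1 : ℝ)) ω * (w p - 1)) μ :=
      (((integrable_const (1 : ℝ)).indicator (hmeas p)).mul_const _)
    have : ∫ ω, X p ω ∂μ
        = (∫ ω, (A p).indicator (fun _ => (1 : ℝ)) ω * (w p - 1) ∂μ) + ∫ _ω, (1 : ℝ) ∂μ := by
      simp only [hXdef]
      exact integral_add hI (integrable_const 1)
    rw [this, integral_mul_const, MeasureTheory.integral_indicator_const _ (hmeas p),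
      measureReal_def, hprob p hp, ENNReal.toReal_ofReal (hq p hp)]
    simp [mul_comm]
    ring

  have hprime_n : ∀ p ∈ n.primeFactors, Nat.Prime p := fun p hp => Nat.prime_of_mem_primeFactors hp
  have hprime_m : ∀ p ∈ m.primeFactors, Nat.Prime p := fun p hp => Nat.prime_of_mem_primeFactors hp
  have hp2 : ∀ p : ℕ, p.Prime → (2:ℝ) ≤ (p:ℝ) := fun p hp => by exact_mod_cast hp.two_le
  -- per prime integral values
  have hval1 : ∀ p ∈ n.primeFactors \ m.primeFactors,
      ∫ ω, X p ω ∂μ = (p:ℝ)^(1-δ) := by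
    intro p hp
    obtain ⟨ha, hb⟩ := Finset.mem_sdiff.1 hp
    have hpp := hprime_n p ha
    have h2 := hp2 p hpp
    have hp1 : (p:ℝ) - 1 ≠ 0 := by linarith
    have hwp : w p = p := by simp only [hw, if_pos ha, if_neg hb, mul_one]
    rw [hint p hpp, hwp]
    field_simp
    ring
  have hval2 : ∀ p ∈ m.primeFactors \ n.primeFactors,
      ∫ ω, X p ω ∂μ = (p:ℝ)^(1-δ) := by
    intro p hp
    obtain ⟨ha, hb⟩ := Finset.mem_sdiff.1 hp
    have hpp := hprime_m p ha
    have h2 := hp2 p hpp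
    have hp1 : (p:ℝ) - 1 ≠ 0 := by linarith
    have hwp : w p = p := by simp only [hw, if_pos ha, if_neg hb, one_mul]
    rw [hint p hpp, hwp]
    field_simp
    ring
  have hval3 : ∀ p ∈ n.primeFactors ∩ m.primeFactors,
      ∫ ω, X p ω ∂μ = (p:ℝ)^(2-δ) * (1 - (p:ℝ)^(δ-1) + (p:ℝ)⁻¹) := by
    intro p hp
    obtain ⟨ha, hb⟩ := Finset.mem_inter.1 hp
    have hpp := hprime_n p ha
    have h2 := hp2 p hpp
    have hp0 : (0:ℝ) < p := by linarith
    have hp1 : (p:ℝ) - 1 ≠ 0 := by linarith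
    have hwp : w p = p * p := by simp only [hw, if_pos ha, if_pos hb]
    have e1 : (p:ℝ)^(2-δ) = p * (p:ℝ)^(1-δ) := by
      rw [show (2-δ : ℝ) = 1 + (1-δ) by ring, Real.rpow_add hp0, Real.rpow_one]
    have e2 : (p:ℝ)^(2-δ) * (p:ℝ)^(δ-1) = p := by
      rw [← Real.rpow_add hp0, show (2-δ+(δ-1):ℝ) = 1 by ring, Real.rpow_one]
    have e3 : (p:ℝ)^(2-δ) * (p:ℝ)⁻¹ = (p:ℝ)^(1-δ) := by
      rw [← Real.rpow_neg_one, ← Real.rpow_add hp0, show (2-δ+(-1):ℝ) = 1-δ by ring]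
    have hrhs : (p:ℝ)^(2-δ) * (1 - (p:ℝ)^(δ-1) + (p:ℝ)⁻¹)
        = p * (p:ℝ)^(1-δ) - p + (p:ℝ)^(1-δ) := by
      rw [mul_add, mul_sub, mul_one, e2, e3, e1]
    rw [hint p hpp, hwp, hrhs]
    field_simp
    ring
  -- decomposition of U
  have hsplit : U = ((n.primeFactors \ m.primeFactors) ∪ (m.primeFactors \ n.primeFactors))
      ∪ (n.primeFactors ∩ m.primeFactors) := by
    ext p
    simp only [hU, Finset.mem_union, Finset.mem_sdiff, Finset.mem_inter]
    tauto
  have hd12 : Disjoint (n.primeFactors \ m.primeFactors) (m.primeFactors \ n.primeFactors) := by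
    rw [Finset.disjoint_left]
    intro a ha hb
    simp only [Finset.mem_sdiff] at ha hb
    tauto
  have hd3 : Disjoint ((n.primeFactors \ m.primeFactors) ∪ (m.primeFactors \ n.primeFactors))
      (n.primeFactors ∩ m.primeFactors) := by
    rw [Finset.disjoint_left]
    intro a ha hb
    simp only [Finset.mem_union, Finset.mem_sdiff, Finset.mem_inter] at ha hb
    tauto
  have hgcd : (Nat.gcd n m).primeFactors = n.primeFactors ∩ m.primeFactors :=
    Nat.primeFactors_gcd hn.ne' hm.ne'
  have heq : (∫ ω, (∏ p ∈ n.primeFactors, if ω ∈ A p then (p : ℝ) else 1)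
        * (∏ p ∈ m.primeFactors, if ω ∈ A p then (p : ℝ) else 1) ∂μ)
      = (∏ p ∈ n.primeFactors \ m.primeFactors, (p : ℝ) ^ (1 - δ))
        * (∏ p ∈ m.primeFactors \ n.primeFactors, (p : ℝ) ^ (1 - δ))
        * (∏ p ∈ (Nat.gcd n m).primeFactors,
            (p : ℝ) ^ (2 - δ) * (1 - (p : ℝ) ^ (δ - 1) + (p : ℝ)⁻¹)) := by
    calc (∫ ω, (∏ p ∈ n.primeFactors, if ω ∈ A p then (p : ℝ) else 1)
        * (∏ p ∈ m.primeFactors, if ω ∈ A p then (p : ℝ) else 1) ∂μ)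
        = ∫ ω, ∏ p ∈ U, X p ω ∂μ :=
          integral_congr_ae (Filter.Eventually.of_forall key)
      _ = ∏ p ∈ U, ∫ ω, X p ω ∂μ := integral_prod_of_iIndep μ X hXmeas hXindep U
      _ = _ := by
          rw [hsplit, Finset.prod_union hd3, Finset.prod_union hd12, hgcd,
            Finset.prod_congr rfl hval1, Finset.prod_congr rfl hval2,
            Finset.prod_congr rfl hval3]
  refine ⟨heq, ?_⟩
  rw [heq]
  -- the upper bound
  set I := n.primeFactors ∩ m.primeFactors with hI
  have hQ3 : (∏ p ∈ (Nat.gcd n m).primeFactors,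
        (p : ℝ) ^ (2 - δ) * (1 - (p : ℝ) ^ (δ - 1) + (p : ℝ)⁻¹))
      ≤ ∏ p ∈ I, (p:ℝ)^(2-δ) := by
    rw [hgcd]
    apply Finset.prod_le_prod
    · intro p hp
      have hpp := hprime_n p (Finset.mem_inter.1 hp).1
      have h2 := hp2 p hpp
      have hle1 : (p:ℝ)^(δ-1) ≤ 1 :=
        Real.rpow_le_one_of_one_le_of_nonpos (by linarith) (by linarith)
      have hinv : (0:ℝ) ≤ (p:ℝ)⁻¹ := by positivity
      have : (0:ℝ) ≤ 1 - (p:ℝ)^(δ-1) + (p:ℝ)⁻¹ := by linarith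
      exact mul_nonneg (Real.rpow_nonneg (by linarith) _) this
    · intro p hp
      have hpp := hprime_n p (Finset.mem_inter.1 hp).1
      have h2 := hp2 p hpp
      have hle : (p:ℝ)⁻¹ ≤ (p:ℝ)^(δ-1) := by
        rw [← Real.rpow_neg_one]
        exact Real.rpow_le_rpow_of_exponent_le (by linarith) (by linarith)
      have hfac : 1 - (p:ℝ)^(δ-1) + (p:ℝ)⁻¹ ≤ 1 := by linarith
      calc (p:ℝ)^(2-δ) * (1 - (p:ℝ)^(δ-1) + (p:ℝ)⁻¹) ≤ (p:ℝ)^(2-δ) * 1 :=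
            mul_le_mul_of_nonneg_left hfac (Real.rpow_nonneg (by linarith) _)
        _ = (p:ℝ)^(2-δ) := mul_one _
  -- rewrite the RHS
  have hcast : ∀ s : Finset ℕ, ((∏ p ∈ s, p : ℕ) : ℝ) = ∏ p ∈ s, (p:ℝ) := by
    intro s; push_cast; rfl
  have hradn : (rad n : ℝ)^(1-δ) = ∏ p ∈ n.primeFactors, (p:ℝ)^(1-δ) := by
    rw [rad, hcast, Real.finset_prod_rpow _ _ (fun p _ => by positivity)]
  have hradm : (rad m : ℝ)^(1-δ) = ∏ p ∈ m.primeFactors, (p:ℝ)^(1-δ) := by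
    rw [rad, hcast, Real.finset_prod_rpow _ _ (fun p _ => by positivity)]
  have hradg : (rad (Nat.gcd n m) : ℝ)^δ = ∏ p ∈ I, (p:ℝ)^δ := by
    rw [rad, hcast, Real.finset_prod_rpow _ _ (fun p _ => by positivity), hgcd]
  have hn_split : (∏ p ∈ n.primeFactors, (p:ℝ)^(1-δ))
      = (∏ p ∈ n.primeFactors \ m.primeFactors, (p:ℝ)^(1-δ)) * ∏ p ∈ I, (p:ℝ)^(1-δ) := by
    rw [← Finset.prod_union (Finset.sdiff_disjoint.mono_right Finset.inter_subset_right)]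
    congr 1
    ext p
    simp only [Finset.mem_union, Finset.mem_sdiff, hI, Finset.mem_inter]
    tauto
  have hm_split : (∏ p ∈ m.primeFactors, (p:ℝ)^(1-δ))
      = (∏ p ∈ m.primeFactors \ n.primeFactors, (p:ℝ)^(1-δ)) * ∏ p ∈ I, (p:ℝ)^(1-δ) := by
    rw [← Finset.prod_union (Finset.sdiff_disjoint.mono_right Finset.inter_subset_left)]
    congr 1
    ext p
    simp only [Finset.mem_union, Finset.mem_sdiff, hI, Finset.mem_inter]
    tauto
  have hcomb : (∏ p ∈ I, (p:ℝ)^(1-δ)) * (∏ p ∈ I, (p:ℝ)^(1-δ)) * (∏ p ∈ I, (p:ℝ)^δ)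
      = ∏ p ∈ I, (p:ℝ)^(2-δ) := by
    rw [← Finset.prod_mul_distrib, ← Finset.prod_mul_distrib]
    refine Finset.prod_congr rfl fun p hp => ?_
    have hpp := hprime_n p (Finset.mem_inter.1 hp).1
    have hp0 : (0:ℝ) < p := by have := hp2 p hpp; linarith
    rw [← Real.rpow_add hp0, ← Real.rpow_add hp0]
    congr 1
    ring
  -- nonnegativity
  have hP1 : (0:ℝ) ≤ ∏ p ∈ n.primeFactors \ m.primeFactors, (p:ℝ)^(1-δ) :=
    Finset.prod_nonneg fun p _ => Real.rpow_nonneg (by positivity) _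
  have hP2 : (0:ℝ) ≤ ∏ p ∈ m.primeFactors \ n.primeFactors, (p:ℝ)^(1-δ) :=
    Finset.prod_nonneg fun p _ => Real.rpow_nonneg (by positivity) _
  have hQ : (0:ℝ) ≤ ∏ p ∈ I, (p:ℝ)^(2-δ) :=
    Finset.prod_nonneg fun p _ => Real.rpow_nonneg (by positivity) _
  have hrhs : 2 * (rad n : ℝ) ^ (1 - δ) * (rad m : ℝ) ^ (1 - δ) * (rad (Nat.gcd n m) : ℝ) ^ δ
      = 2 * ((∏ p ∈ n.primeFactors \ m.primeFactors, (p:ℝ)^(1-δ))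
        * (∏ p ∈ m.primeFactors \ n.primeFactors, (p:ℝ)^(1-δ))
        * ∏ p ∈ I, (p:ℝ)^(2-δ)) := by
    rw [hradn, hradm, hradg, hn_split, hm_split, ← hcomb]
    ring
  rw [hrhs]
  have hmain : (∏ p ∈ n.primeFactors \ m.primeFactors, (p:ℝ)^(1-δ))
        * (∏ p ∈ m.primeFactors \ n.primeFactors, (p:ℝ)^(1-δ))
        * (∏ p ∈ (Nat.gcd n m).primeFactors,
            (p : ℝ) ^ (2 - δ) * (1 - (p : ℝ) ^ (δ - 1) + (p : ℝ)⁻¹))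
      ≤ (∏ p ∈ n.primeFactors \ m.primeFactors, (p:ℝ)^(1-δ))
        * (∏ p ∈ m.primeFactors \ n.primeFactors, (p:ℝ)^(1-δ))
        * ∏ p ∈ I, (p:ℝ)^(2-δ) :=
    mul_le_mul_of_nonneg_left hQ3 (mul_nonneg hP1 hP2)
  have h2 : (∏ p ∈ n.primeFactors \ m.primeFactors, (p:ℝ)^(1-δ))
        * (∏ p ∈ m.primeFactors \ n.primeFactors, (p:ℝ)^(1-δ))
        * ∏ p ∈ I, (p:ℝ)^(2-δ)
      ≤ 2 * ((∏ p ∈ n.primeFactors \ m.primeFactors, (p:ℝ)^(1-δ))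
        * (∏ p ∈ m.primeFactors \ n.primeFactors, (p:ℝ)^(1-δ))
        * ∏ p ∈ I, (p:ℝ)^(2-δ)) := by
    nlinarith [mul_nonneg (mul_nonneg hP1 hP2) hQ]
  linarith
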